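/- Let $d \ge 1$, let $2 \le \ell \le d$, and let $\mu$ be a Borel probability measure on the unit sphere $S^{d-1} \subset \mathbb{R}^d$. If $u_1, \dots, u_\ell$ are drawn i.i.d. according to $\mu$, then the probability that they are pairwise orthogonal is at most $\frac{d!}{(d-\ell)! \cdot d^\ell}$. -/

import Mathlib

open MeasureTheory
open scoped RealInnerProductSpace


set_option linter.unusedSectionVars false
set_option maxHeartbeats 1000000

open MeasureTheory Finset
open scoped RealInnerProductSpace

namespace MutualOrth

section Comb
variable {ι : Type*} [DecidableEq ι]


noncomputable def esum (y : ι → ℝ) (s : Finset ι) (k : ℕ) : ℝ :=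
  ∑ S ∈ s.powersetCard k, ∏ i ∈ S, y i

lemma esum_zero (y : ι → ℝ) (s : Finset ι) : esum y s 0 = 1 := by simp [esum]

lemma esum_one (y : ι → ℝ) (s : Finset ι) : esum y s 1 = ∑ i ∈ s, y i := by
  unfold esum
  rw [Finset.powersetCard_one, Finset.sum_map]
  simp

lemma esum_nonneg {y : ι → ℝ} (hy : ∀ i, 0 ≤ y i) (s : Finset ι) (k : ℕ) :
    0 ≤ esum y s k :=
  Finset.sum_nonneg fun _ _ => Finset.prod_nonneg fun i _ => hy i

lemma esum_insert {y : ι → ℝ} {s : Finset ι} {j : ι} (hj : j ∉ s) (k : ℕ) :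
    esum y (insert j s) (k + 1) = esum y s (k + 1) + y j * esum y s k := by
  unfold esum
  rw [Finset.powersetCard_succ_insert hj, Finset.sum_union, Finset.sum_image, Finset.mul_sum]
  · congr 1
    refine Finset.sum_congr rfl fun S hS => ?_
    rw [Finset.prod_insert fun h => hj ((Finset.mem_powersetCard.1 hS).1 h)]
  · intro S hS T hT hST
    have hjS : j ∉ S := fun h => hj ((Finset.mem_powersetCard.1 hS).1 h)
    have hjT : j ∉ T := fun h => hj ((Finset.mem_powersetCard.1 hT).1 h)
    have := congrArg (Finset.erase · j) hST
    simpa [Finset.erase_insert, hjS, hjT] using this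
  · rw [Finset.disjoint_right]
    rintro S hS hS'
    obtain ⟨T, hT, rfl⟩ := Finset.mem_image.1 hS
    exact hj ((Finset.mem_powersetCard.1 hS').1 (Finset.mem_insert_self j T))

lemma esum_erase {y : ι → ℝ} {s : Finset ι} {j : ι} (hj : j ∈ s) (k : ℕ) :
    esum y s (k + 1) = esum y (s.erase j) (k + 1) + y j * esum y (s.erase j) k := by
  conv_lhs => rw [← Finset.insert_erase hj]
  exact esum_insert (Finset.notMem_erase j s) k

lemma sum_mul_esum_erase (y : ι → ℝ) (s : Finset ι) (k : ℕ) :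
    ∑ i ∈ s, y i * esum y (s.erase i) k = (k + 1 : ℝ) * esum y s (k + 1) := by
  have h1 : ∑ i ∈ s, y i * esum y (s.erase i) k
      = ∑ p ∈ s.sigma (fun i => (s.erase i).powersetCard k), ∏ j ∈ insert p.1 p.2, y j := by
    rw [Finset.sum_sigma]
    refine Finset.sum_congr rfl fun i hi => ?_
    rw [esum, Finset.mul_sum]
    refine Finset.sum_congr rfl fun S hS => ?_
    rw [Finset.prod_insert fun h => (Finset.notMem_erase i s)
      ((Finset.mem_powersetCard.1 hS).1 h)]
  have h2 : ∑ p ∈ (s.powersetCard (k+1)).sigma (fun T => T), ∏ j ∈ p.1, y j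
      = (k + 1 : ℝ) * esum y s (k + 1) := by
    rw [Finset.sum_sigma, esum, Finset.mul_sum]
    refine Finset.sum_congr rfl fun T hT => ?_
    rw [show (∑ x ∈ T, ∏ j ∈ (⟨T, x⟩ : (_ : Finset ι) × ι).fst, y j)
        = ∑ _x ∈ T, ∏ j ∈ T, y j from rfl, Finset.sum_const,
      (Finset.mem_powersetCard.1 hT).2, nsmul_eq_mul]
    push_cast
    ring
  rw [h1, ← h2]
  refine Finset.sum_nbij' (fun p => ⟨insert p.1 p.2, p.1⟩) (fun q => ⟨q.2, q.1.erase q.2⟩)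
    ?_ ?_ ?_ ?_ ?_
  · rintro ⟨i, S⟩ hp
    obtain ⟨hi, hS⟩ := Finset.mem_sigma.1 hp
    obtain ⟨hSs, hcard⟩ := Finset.mem_powersetCard.1 hS
    refine Finset.mem_sigma.2 ⟨Finset.mem_powersetCard.2 ⟨?_, ?_⟩, Finset.mem_insert_self _ _⟩
    · exact Finset.insert_subset hi (hSs.trans (Finset.erase_subset _ _))
    · rw [Finset.card_insert_of_notMem fun h => (Finset.notMem_erase i s) (hSs h), hcard]
  · rintro ⟨T, i⟩ hq
    obtain ⟨hT, hi⟩ := Finset.mem_sigma.1 hq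
    obtain ⟨hTs, hcard⟩ := Finset.mem_powersetCard.1 hT
    refine Finset.mem_sigma.2 ⟨hTs hi, Finset.mem_powersetCard.2 ⟨?_, ?_⟩⟩
    · intro x hx
      exact Finset.mem_erase.2 ⟨(Finset.mem_erase.1 hx).1, hTs (Finset.mem_of_mem_erase hx)⟩
    · rw [Finset.card_erase_of_mem hi, hcard]
      omega
  · rintro ⟨i, S⟩ hp
    obtain ⟨hi, hS⟩ := Finset.mem_sigma.1 hp
    have hiS : i ∉ S := fun h => (Finset.notMem_erase i s)
      ((Finset.mem_powersetCard.1 hS).1 h)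
    simp [Finset.erase_insert hiS]
  · rintro ⟨T, i⟩ hq
    obtain ⟨hT, hi⟩ := Finset.mem_sigma.1 hq
    simp [Finset.insert_erase hi]
  · rintro ⟨i, S⟩ hp
    rfl

lemma pair_identity {y : ι → ℝ} {s : Finset ι} {i j : ι} (hi : i ∈ s) (hj : j ∈ s)
    (hij : i ≠ j) (k : ℕ) :
    y i * esum y (s.erase i) k - y j * esum y (s.erase j) k
      = (y i - y j) * esum y ((s.erase i).erase j) k := by
  cases k with
  | zero => simp only [esum_zero, mul_one]
  | succ m =>
    have hji : j ∈ s.erase i := Finset.mem_erase.2 ⟨Ne.symm hij, hj⟩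
    have hij' : i ∈ s.erase j := Finset.mem_erase.2 ⟨hij, hi⟩
    have e1 := esum_erase (y := y) hji m
    have e2 := esum_erase (y := y) hij' m
    rw [e1, e2, Finset.erase_right_comm (a := j) (b := i)]
    ring

lemma chebyshev_step {y : ι → ℝ} (hy : ∀ i, 0 ≤ y i) (s : Finset ι) (k : ℕ) :
    (∑ i ∈ s, y i * esum y (s.erase i) k) * (∑ i ∈ s, y i)
      ≤ (s.card : ℝ) * ∑ i ∈ s, (y i * esum y (s.erase i) k) * y i := by
  refine MonovaryOn.sum_mul_sum_le_card_mul_sum ?_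
  intro i hi j hj hlt
  -- hlt : y i < y j ; goal : y i * esum y (s.erase i) k ≤ y j * esum y (s.erase j) k
  rcases eq_or_ne i j with rfl | hij
  · exact le_rfl
  · simp only
    have h := pair_identity (y := y) (Finset.mem_coe.1 hj) (Finset.mem_coe.1 hi) (Ne.symm hij) k
    nlinarith [esum_nonneg hy ((s.erase j).erase i) k]

lemma esum_step {y : ι → ℝ} (hy : ∀ i, 0 ≤ y i) {s : Finset ι}
    (hs : ∑ i ∈ s, y i = 1) (k : ℕ) :
    (s.card : ℝ) * ((k + 1 : ℝ) * esum y s (k + 1))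
      ≤ ((s.card : ℝ) - k) * esum y s k := by
  cases k with
  | zero =>
    rw [esum_one y s, hs, esum_zero]
    norm_num
  | succ m =>
    have h4a := sum_mul_esum_erase y s m
    have h4b := sum_mul_esum_erase y s (m + 1)
    have hQ : ∑ i ∈ s, y i * esum y (s.erase i) (m + 1)
        = esum y s (m + 1) - ∑ i ∈ s, (y i * esum y (s.erase i) m) * y i := by
      have hterm : ∀ i ∈ s, y i * esum y (s.erase i) (m+1) + y i * esum y (s.erase i) m * y i
          = y i * esum y s (m+1) := fun i hi => by rw [esum_erase hi m]; ring
      rw [eq_sub_iff_add_eq, ← Finset.sum_add_distrib, Finset.sum_congr rfl hterm,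
        ← Finset.sum_mul, hs, one_mul]
    have cheb := chebyshev_step hy s m
    rw [hs, mul_one, h4a] at cheb
    rw [hQ] at h4b
    set Q := ∑ i ∈ s, (y i * esum y (s.erase i) m) * y i with hQdef
    have hn : (0:ℝ) ≤ (s.card : ℝ) := Nat.cast_nonneg _
    have e : ((s.card : ℕ):ℝ) * ((↑(m+1)+1) * esum y s (m+1+1))
        = (s.card:ℝ) * esum y s (m+1) - (s.card:ℝ) * Q := by rw [← h4b]; ring
    push_cast at e cheb ⊢
    linarith [e, cheb]

lemma esum_le_descFactorial {ι : Type*} [Fintype ι] [DecidableEq ι]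
    {y : ι → ℝ} (hy : ∀ i, 0 ≤ y i) (hs : ∑ i, y i = 1) :
    ∀ k : ℕ, k ≤ Fintype.card ι →
      ((Fintype.card ι : ℝ)) ^ k * (k.factorial : ℝ) * esum y Finset.univ k
        ≤ ((Fintype.card ι).descFactorial k : ℝ) := by
  intro k
  induction k with
  | zero => intro _; simp [esum_zero]
  | succ k ih =>
    intro hk1
    have hk : k ≤ Fintype.card ι := Nat.le_of_succ_le hk1
    have ihk := ih hk
    set d := Fintype.card ι with hd
    have hcard : (Finset.univ : Finset ι).card = d := by rw [Finset.card_univ]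
    have step := esum_step hy hs k
    rw [hcard] at step
    have hdk : (k : ℝ) ≤ (d : ℝ) := by exact_mod_cast hk
    have h1 : ((d:ℝ)) ^ (k+1) * ((k+1).factorial : ℝ) * esum y Finset.univ (k+1)
        = (d:ℝ)^k * (k.factorial : ℝ) * ((d:ℝ) * ((k+1:ℝ) * esum y Finset.univ (k+1))) := by
      rw [Nat.factorial_succ]
      push_cast
      ring
    have h2 : (d:ℝ)^k * (k.factorial : ℝ) * ((d:ℝ) * ((k+1:ℝ) * esum y Finset.univ (k+1)))
        ≤ (d:ℝ)^k * (k.factorial : ℝ) * (((d:ℝ) - k) * esum y Finset.univ k) := by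
      refine mul_le_mul_of_nonneg_left step (by positivity)
    have h3 : (d:ℝ)^k * (k.factorial : ℝ) * (((d:ℝ) - k) * esum y Finset.univ k)
        = ((d:ℝ) - k) * ((d:ℝ)^k * (k.factorial : ℝ) * esum y Finset.univ k) := by ring
    have h4 : ((d:ℝ) - k) * ((d:ℝ)^k * (k.factorial : ℝ) * esum y Finset.univ k)
        ≤ ((d:ℝ) - k) * (d.descFactorial k : ℝ) :=
      mul_le_mul_of_nonneg_left ihk (by linarith)
    have h5 : ((d:ℝ) - k) * (d.descFactorial k : ℝ) = (d.descFactorial (k+1) : ℝ) := by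
      rw [Nat.descFactorial_succ]
      push_cast [Nat.cast_sub hk]
      ring
    linarith [h1.le, h2, h4, h3.le, h5.le, h1.ge, h3.ge, h5.ge]

lemma sum_injective_eq {ι : Type*} [Fintype ι] [DecidableEq ι]
    (κ : Type*) [Fintype κ] [DecidableEq κ] (y : ι → ℝ) :
    ∑ f ∈ Finset.univ.filter (fun f : κ → ι => Function.Injective f), ∏ j, y (f j)
      = ((Fintype.card κ).factorial : ℝ) * esum y Finset.univ (Fintype.card κ) := by
  classical
  set n := Fintype.card κ with hn
  set I := Finset.univ.filter (fun f : κ → ι => Function.Injective f) with hI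
  have hmap : ∀ f ∈ I, Finset.image f Finset.univ ∈ Finset.univ.powersetCard n := by
    intro f hf
    have hinj : Function.Injective f := (Finset.mem_filter.1 hf).2
    exact Finset.mem_powersetCard.2 ⟨Finset.subset_univ _, by
      rw [Finset.card_image_of_injective _ hinj, Finset.card_univ]⟩
  rw [← Finset.sum_fiberwise_of_maps_to hmap (fun f => ∏ j, y (f j))]
  have hfiber : ∀ S ∈ Finset.univ.powersetCard n,
      ∑ f ∈ I.filter (fun f => Finset.image f Finset.univ = S), ∏ j, y (f j)
        = (n.factorial : ℝ) * ∏ i ∈ S, y i := by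
    intro S hS
    have hScard : S.card = n := (Finset.mem_powersetCard.1 hS).2
    have hterm : ∀ f ∈ I.filter (fun f => Finset.image f Finset.univ = S),
        (∏ j, y (f j)) = ∏ i ∈ S, y i := by
      intro f hf
      obtain ⟨hfI, hfS⟩ := Finset.mem_filter.1 hf
      have hinj : Function.Injective f := (Finset.mem_filter.1 hfI).2
      rw [← hfS, Finset.prod_image (fun a _ b _ h => hinj h)]
    rw [Finset.sum_congr rfl hterm, Finset.sum_const, nsmul_eq_mul]
    congr 1
    -- card of fiber = n !
    have : (I.filter (fun f => Finset.image f Finset.univ = S)).card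
        = Fintype.card (κ ↪ {x // x ∈ S}) := by
      refine Finset.card_bij'
        (fun f hf => ⟨fun j => ⟨f j, by
            rw [← (Finset.mem_filter.1 hf).2]
            exact Finset.mem_image_of_mem f (Finset.mem_univ j)⟩,
          fun a b h =>
            (Finset.mem_filter.1 (Finset.mem_filter.1 hf).1).2 (congrArg Subtype.val h)⟩)
        (fun e _ => fun j => (e j : ι)) ?_ ?_ ?_ ?_
      · intro f hf; exact Finset.mem_univ _
      · intro e he
        have hinj : Function.Injective (fun j => ((e j : ι))) :=
          fun a b h => e.injective (Subtype.ext h)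
        refine Finset.mem_filter.2 ⟨Finset.mem_filter.2 ⟨Finset.mem_univ _, hinj⟩, ?_⟩
        have hsub : Finset.image (fun j => ((e j : ι))) Finset.univ ⊆ S := by
          intro x hx
          obtain ⟨j, _, rfl⟩ := Finset.mem_image.1 hx
          exact (e j).2
        refine Finset.eq_of_subset_of_card_le hsub ?_
        rw [Finset.card_image_of_injective _ hinj, Finset.card_univ, hScard]
      · intro f hf; rfl
      · intro e he
        exact Function.Embedding.ext fun j => Subtype.ext rfl
    rw [this, Fintype.card_embedding_eq, Fintype.card_coe, hScard, Nat.descFactorial_self]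
  rw [Finset.sum_congr rfl hfiber, ← Finset.mul_sum, esum]

end Comb

section Mat
variable {n : Type*} [Fintype n] [DecidableEq n]


lemma psd_det_nonneg {N : Matrix n n ℝ} (hN : N.PosSemidef) : 0 ≤ N.det := by
  rw [hN.isHermitian.det_eq_prod_eigenvalues]
  exact Finset.prod_nonneg fun i _ => hN.eigenvalues_nonneg i

lemma psd_trace_eq_sum_eigenvalues {N : Matrix n n ℝ} (hN : N.IsHermitian) :
    N.trace = ∑ i, hN.eigenvalues i := by
  simpa using hN.trace_eq_sum_eigenvalues

lemma psd_det_le_trace_div_card_pow [Nonempty n] {N : Matrix n n ℝ} (hN : N.PosSemidef) :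
    N.det ≤ (N.trace / Fintype.card n) ^ (Fintype.card n) := by
  classical
  set c := Fintype.card n with hc
  have hcpos : 0 < c := Fintype.card_pos
  have hdet := hN.isHermitian.det_eq_prod_eigenvalues
  have htr := psd_trace_eq_sum_eigenvalues hN.isHermitian
  set lam := hN.isHermitian.eigenvalues with hlam
  have hnonneg : ∀ i ∈ Finset.univ, (0:ℝ) ≤ lam i := fun i _ => hN.eigenvalues_nonneg i
  have amgm := Real.geom_mean_le_arith_mean_weighted Finset.univ (fun _ => (c : ℝ)⁻¹) lam
    (fun _ _ => by positivity)
    (by rw [Finset.sum_const, Finset.card_univ, nsmul_eq_mul]; field_simp; rfl)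
    hnonneg
  -- amgm : ∏ i, lam i ^ (c⁻¹ : ℝ) ≤ ∑ i, c⁻¹ * lam i
  have hL : (∏ i, lam i ^ ((c : ℝ)⁻¹)) ^ (c : ℕ) = ∏ i, lam i := by
    rw [← Finset.prod_pow]
    refine Finset.prod_congr rfl fun i _ => ?_
    rw [← Real.rpow_natCast (lam i ^ ((c:ℝ)⁻¹)) c, ← Real.rpow_mul (hnonneg i (Finset.mem_univ i)),
      inv_mul_cancel₀ (by positivity), Real.rpow_one]
  have hR : ∑ i, (c : ℝ)⁻¹ * lam i = N.trace / c := by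
    rw [← Finset.mul_sum, ← htr]
    ring
  have hbase : (0:ℝ) ≤ ∏ i, lam i ^ ((c : ℝ)⁻¹) :=
    Finset.prod_nonneg fun i _ => Real.rpow_nonneg (hnonneg i (Finset.mem_univ i)) _
  calc N.det = (∏ i, lam i ^ ((c : ℝ)⁻¹)) ^ (c : ℕ) := by
        rw [hL, hdet]; norm_num
    _ ≤ (N.trace / c) ^ (c : ℕ) := by
        refine pow_le_pow_left₀ hbase ?_ _
        rw [← hR]; exact amgm

/-- Hadamard's inequality for real PSD matrices. -/
lemma psd_det_le_prod_diag [Nonempty n] {N : Matrix n n ℝ} (hN : N.PosSemidef) :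
    N.det ≤ ∏ i, N i i := by
  classical
  obtain ⟨B, hB⟩ : ∃ B : Matrix n n ℝ, N = B.conjTranspose * B := by
    open scoped MatrixOrder in
    refine ⟨CFC.sqrt N, ?_⟩
    rw [← Matrix.star_eq_conjTranspose, (CFC.sqrt_nonneg N).isSelfAdjoint.star_eq,
      CFC.sqrt_mul_sqrt_self N hN.nonneg]
  have hdiag : ∀ i, N i i = ∑ k, (B k i) ^ 2 := by
    intro i
    rw [hB]
    simp [Matrix.mul_apply, Matrix.conjTranspose_apply, sq]
  have hdiag_nonneg : ∀ i, 0 ≤ N i i := fun i => by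
    rw [hdiag i]; positivity
  by_cases hzero : ∃ i, N i i = 0
  · obtain ⟨i, hi⟩ := hzero
    have hBcol : ∀ k, B k i = 0 := by
      intro k
      have h := hdiag i
      rw [hi] at h
      have := (Finset.sum_eq_zero_iff_of_nonneg (fun k _ => sq_nonneg (B k i))).mp h.symm
      have hk := this k (Finset.mem_univ k)
      exact pow_eq_zero_iff (two_ne_zero) |>.mp hk
    have hrow : ∀ j, N i j = 0 := by
      intro j
      rw [hB]
      simp only [Matrix.mul_apply, Matrix.conjTranspose_apply]
      refine Finset.sum_eq_zero fun k _ => by rw [hBcol k]; simp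
    rw [Matrix.det_eq_zero_of_row_eq_zero i hrow]
    exact Finset.prod_nonneg fun j _ => hdiag_nonneg j
  · push_neg at hzero
    have hpos : ∀ i, 0 < N i i := fun i => (hdiag_nonneg i).lt_of_ne' (hzero i)
    set D : Matrix n n ℝ := Matrix.diagonal (fun i => (Real.sqrt (N i i))⁻¹) with hD
    have hDsym : D.conjTranspose = D := by
      rw [hD, Matrix.diagonal_conjTranspose]
      congr
    have hN' : (D * N * D).PosSemidef := by
      have := hN.mul_mul_conjTranspose_same D
      rwa [hDsym] at this
    have hdiag' : ∀ i, (D * N * D) i i = 1 := by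
      intro i
      have hs : Real.sqrt (N i i) ≠ 0 := (Real.sqrt_pos.mpr (hpos i)).ne'
      have hexp : (D * N * D) i i = (√(N i i))⁻¹ * N i i * (√(N i i))⁻¹ := by
        rw [hD]
        simp only [Matrix.mul_diagonal, Matrix.diagonal_mul]
      rw [hexp, ← Real.mul_self_sqrt (hdiag_nonneg i)]
      field_simp
      rw [Real.sqrt_sq (Real.sqrt_nonneg _)]
    have htr' : (D * N * D).trace = Fintype.card n := by
      rw [Matrix.trace]
      simp only [Matrix.diag_apply, hdiag']
      simp [Finset.card_univ]
    have hdet' : (D * N * D).det = N.det * ∏ i, ((Real.sqrt (N i i))⁻¹) ^ 2 := by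
      rw [Matrix.det_mul, Matrix.det_mul, hD, Matrix.det_diagonal]
      rw [Finset.prod_pow]
      ring
    have hbound := psd_det_le_trace_div_card_pow hN'
    rw [htr', hdet'] at hbound
    have hcard : ((Fintype.card n : ℝ) / Fintype.card n) ^ (Fintype.card n) = 1 := by
      rw [div_self (by exact_mod_cast Fintype.card_pos.ne')]
      simp
    rw [hcard] at hbound
    have hprod : ∏ i, ((Real.sqrt (N i i))⁻¹) ^ 2 = (∏ i, N i i)⁻¹ := by
      rw [← Finset.prod_inv_distrib]
      refine Finset.prod_congr rfl fun i _ => ?_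
      rw [inv_pow, Real.sq_sqrt (hdiag_nonneg i)]
    rw [hprod] at hbound
    have hprodpos : 0 < ∏ i, N i i := Finset.prod_pos fun i _ => hpos i
    calc N.det = (N.det * (∏ i, N i i)⁻¹) * ∏ i, N i i := by field_simp
      _ ≤ 1 * ∏ i, N i i := by
          exact mul_le_mul_of_nonneg_right hbound hprodpos.le
      _ = ∏ i, N i i := one_mul _

end Mat

section Fub

lemma integrable_pi_prod {α : Type*} [MeasurableSpace α] (μ : Measure α) [IsProbabilityMeasure μ]
    {n : ℕ} (f : Fin n → α → ℝ) (hf : ∀ i, Integrable (f i) μ) :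
    Integrable (fun x : Fin n → α => ∏ i, f i (x i)) (Measure.pi fun _ => μ) := by
  letI : MeasureSpace α := ⟨μ⟩
  haveI : SigmaFinite (volume : Measure α) := by
    change SigmaFinite μ; infer_instance
  have hv : (Measure.pi fun _ : Fin n => μ) = (volume : Measure (Fin n → α)) := by
    rw [volume_pi]; rfl
  rw [hv]
  exact MeasureTheory.Integrable.fintype_prod (f := f) hf

lemma integral_pi_prod {α : Type*} [MeasurableSpace α] (μ : Measure α) [IsProbabilityMeasure μ]
    {n : ℕ} (f : Fin n → α → ℝ) :
    ∫ x : Fin n → α, ∏ i, f i (x i) ∂(Measure.pi fun _ => μ) = ∏ i, ∫ a, f i a ∂μ := by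
  letI : MeasureSpace α := ⟨μ⟩
  haveI : SigmaFinite (volume : Measure α) := by
    change SigmaFinite μ; infer_instance
  have hv : (Measure.pi fun _ : Fin n => μ) = (volume : Measure (Fin n → α)) := by
    rw [volume_pi]; rfl
  rw [hv]
  exact MeasureTheory.integral_fintype_prod_eq_prod (𝕜 := ℝ) (fun i (a : α) => f i a)

end Fub

section Euc
variable {d : ℕ} {μ : Measure (EuclideanSpace ℝ (Fin d))} [IsProbabilityMeasure μ]


lemma abs_coord_le_norm (v : EuclideanSpace ℝ (Fin d)) (a : Fin d) : |v a| ≤ ‖v‖ := by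
  rw [EuclideanSpace.norm_eq, ← Real.sqrt_sq_eq_abs]
  refine Real.sqrt_le_sqrt ?_
  have := Finset.single_le_sum (f := fun i => ‖v i‖ ^ 2) (fun i _ => by positivity)
    (Finset.mem_univ a)
  simpa [Real.norm_eq_abs, sq_abs] using this

lemma ae_norm_one (hμ : μ (Metric.sphere (0 : EuclideanSpace ℝ (Fin d)) 1) = 1) :
    ∀ᵐ v ∂μ, ‖v‖ = 1 := by
  have hc : μ (Metric.sphere (0 : EuclideanSpace ℝ (Fin d)) 1)ᶜ = 0 := by
    rw [measure_compl (Metric.isClosed_sphere.measurableSet) (measure_ne_top μ _), hμ,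
      measure_univ, tsub_self]
  refine (MeasureTheory.ae_iff).2 ?_
  convert hc using 2
  ext v
  simp [mem_sphere_zero_iff_norm]

lemma integrable_coord_mul (hμ : μ (Metric.sphere (0 : EuclideanSpace ℝ (Fin d)) 1) = 1)
    (a b : Fin d) : Integrable (fun v : EuclideanSpace ℝ (Fin d) => v a * v b) μ := by
  have hcont : Continuous (fun v : EuclideanSpace ℝ (Fin d) => v a * v b) :=
    ((EuclideanSpace.proj a).continuous.mul (EuclideanSpace.proj b).continuous)
  refine ⟨hcont.aestronglyMeasurable, HasFiniteIntegral.of_bounded (C := 1) ?_⟩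
  filter_upwards [ae_norm_one hμ] with v hv
  rw [Real.norm_eq_abs, abs_mul]
  calc |v a| * |v b| ≤ ‖v‖ * ‖v‖ :=
        mul_le_mul (abs_coord_le_norm v a) (abs_coord_le_norm v b) (abs_nonneg _) (norm_nonneg _)
    _ = 1 := by rw [hv]; ring

/-- the "second moment" matrix entries -/
noncomputable def mm (μ : Measure (EuclideanSpace ℝ (Fin d))) (a b : Fin d) : ℝ :=
  ∫ v, v a * v b ∂μ

lemma sum_mm_diag (hμ : μ (Metric.sphere (0 : EuclideanSpace ℝ (Fin d)) 1) = 1) :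
    ∑ a, mm μ a a = 1 := by
  unfold mm
  rw [← integral_finset_sum _ (fun a _ => integrable_coord_mul hμ a a)]
  have : ∀ᵐ v ∂μ, (∑ a, v a * v a) = 1 := by
    filter_upwards [ae_norm_one hμ] with v hv
    have h2 : ‖v‖ ^ 2 = ∑ i, ‖v i‖ ^ 2 := by
      rw [EuclideanSpace.norm_eq, Real.sq_sqrt (by positivity)]
    have : (1:ℝ) = ∑ i, v i * v i := by
      rw [← one_pow 2, ← hv, h2]
      refine Finset.sum_congr rfl fun i _ => by rw [Real.norm_eq_abs, sq_abs, sq]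
    exact this.symm
  rw [integral_congr_ae this, integral_const]
  simp

lemma mm_psd (hμ : μ (Metric.sphere (0 : EuclideanSpace ℝ (Fin d)) 1) = 1)
    {k : ℕ} (f : Fin k → Fin d) :
    (Matrix.of fun i j => mm μ (f i) (f j)).PosSemidef := by
  rw [Matrix.posSemidef_iff_dotProduct_mulVec]
  constructor
  · -- Hermitian
    ext i j
    simp only [Matrix.conjTranspose_apply, Matrix.of_apply, star_trivial]
    unfold mm
    exact integral_congr_ae (Filter.Eventually.of_forall fun v => mul_comm _ _)
  · intro x
    have expand : dotProduct (star x) ((Matrix.of fun i j => mm μ (f i) (f j)).mulVec x)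
        = ∑ i, x i * ∑ j, mm μ (f i) (f j) * x j := by
      simp [dotProduct, Matrix.mulVec]
    have key : (∑ i, x i * ∑ j, mm μ (f i) (f j) * x j)
        = ∫ v, (∑ i, x i * v (f i)) ^ 2 ∂μ := by
      unfold mm
      have swap1 : ∀ i, (∑ j, (∫ v, v (f i) * v (f j) ∂μ) * x j)
          = ∫ v, ∑ j, (v (f i) * v (f j)) * x j ∂μ := by
        intro i
        rw [integral_finset_sum _ (fun j _ => (integrable_coord_mul hμ (f i) (f j)).mul_const (x j))]
        refine Finset.sum_congr rfl fun j _ => by rw [integral_mul_const]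
      have swap2 : (∑ i, x i * ∫ v, ∑ j, (v (f i) * v (f j)) * x j ∂μ)
          = ∫ v, ∑ i, x i * ∑ j, (v (f i) * v (f j)) * x j ∂μ := by
        rw [integral_finset_sum]
        · exact Finset.sum_congr rfl fun i _ => by rw [integral_const_mul]
        · intro i _
          refine Integrable.const_mul ?_ (x i)
          exact integrable_finset_sum _ fun j _ =>
            (integrable_coord_mul hμ (f i) (f j)).mul_const (x j)
      calc (∑ i, x i * ∑ j, (∫ v, v (f i) * v (f j) ∂μ) * x j)
          = ∑ i, x i * ∫ v, ∑ j, (v (f i) * v (f j)) * x j ∂μ := by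
            refine Finset.sum_congr rfl fun i _ => by rw [swap1 i]
        _ = ∫ v, ∑ i, x i * ∑ j, (v (f i) * v (f j)) * x j ∂μ := swap2
        _ = ∫ v, (∑ i, x i * v (f i)) ^ 2 ∂μ := by
            refine integral_congr_ae (Filter.Eventually.of_forall fun v => ?_)
            show (∑ i, x i * ∑ j, v (f i) * v (f j) * x j) = (∑ i, x i * v (f i)) ^ 2
            rw [sq, Finset.sum_mul_sum]
            refine Finset.sum_congr rfl fun i _ => ?_
            rw [Finset.mul_sum]
            exact Finset.sum_congr rfl fun j _ => by ring
    rw [expand, key]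
    exact integral_nonneg fun v => sq_nonneg _

end Euc

section Main

variable {d ℓ : ℕ}

noncomputable def Gmat (u : Fin ℓ → EuclideanSpace ℝ (Fin d)) : Matrix (Fin ℓ) (Fin ℓ) ℝ :=
  Matrix.of fun i j => ∑ k, u i k * u j k

lemma inner_eq_sum (u v : EuclideanSpace ℝ (Fin d)) : ⟪u, v⟫ = ∑ k, u k * v k := by
  simp [PiLp.inner_apply, RCLike.inner_apply, conj_trivial]
  exact Finset.sum_congr rfl fun _ _ => mul_comm _ _

lemma Gmat_psd (u : Fin ℓ → EuclideanSpace ℝ (Fin d)) : (Gmat u).PosSemidef := by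
  have h : Gmat u = (Matrix.of fun (k : Fin d) (i : Fin ℓ) => u i k).conjTranspose
      * (Matrix.of fun (k : Fin d) (i : Fin ℓ) => u i k) := by
    ext i j
    simp [Gmat, Matrix.mul_apply, Matrix.conjTranspose_apply]
  rw [h]
  exact Matrix.posSemidef_conjTranspose_mul_self _

lemma abs_det_le_factorial {k : ℕ} (M : Matrix (Fin k) (Fin k) ℝ) (h : ∀ i j, |M i j| ≤ 1) :
    |M.det| ≤ (k.factorial : ℝ) := by
  rw [Matrix.det_apply']
  calc |∑ σ : Equiv.Perm (Fin k), ((Equiv.Perm.sign σ : ℤ) : ℝ) * ∏ i, M (σ i) i|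
      ≤ ∑ σ : Equiv.Perm (Fin k), |((Equiv.Perm.sign σ : ℤ) : ℝ) * ∏ i, M (σ i) i| :=
        Finset.abs_sum_le_sum_abs _ _
    _ ≤ ∑ _σ : Equiv.Perm (Fin k), (1:ℝ) := by
        refine Finset.sum_le_sum fun σ _ => ?_
        rw [abs_mul]
        have h1 : |((Equiv.Perm.sign σ : ℤ) : ℝ)| = 1 := by
          rcases Int.units_eq_one_or (Equiv.Perm.sign σ) with hs | hs <;> simp [hs]
        rw [h1, one_mul, Finset.abs_prod]
        exact Finset.prod_le_one (fun i _ => abs_nonneg _) (fun i _ => h _ _)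
    _ = (k.factorial : ℝ) := by
        rw [Finset.sum_const, Finset.card_univ, Fintype.card_perm, Fintype.card_fin,
          nsmul_eq_mul, mul_one]

lemma coord_cont (i : Fin ℓ) (k : Fin d) :
    Continuous fun u : Fin ℓ → EuclideanSpace ℝ (Fin d) => u i k := by
  have h := (EuclideanSpace.proj (𝕜 := ℝ) k).continuous.comp
    (continuous_apply (A := fun _ : Fin ℓ => EuclideanSpace ℝ (Fin d)) i)
  convert h using 1
  rfl

lemma det_Gmat_cont : Continuous fun u : Fin ℓ → EuclideanSpace ℝ (Fin d) => (Gmat u).det := by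
  have hent : ∀ i j : Fin ℓ, Continuous fun u : Fin ℓ → EuclideanSpace ℝ (Fin d) => Gmat u i j := by
    intro i j
    simp only [Gmat, Matrix.of_apply]
    exact continuous_finset_sum _ fun k _ => (coord_cont i k).mul (coord_cont j k)
  have h : (fun u : Fin ℓ → EuclideanSpace ℝ (Fin d) => (Gmat u).det)
      = fun u => ∑ σ : Equiv.Perm (Fin ℓ),
          ((Equiv.Perm.sign σ : ℤ) : ℝ) * ∏ i, Gmat u (σ i) i :=
    funext fun u => Matrix.det_apply' _
  rw [h]
  exact continuous_finset_sum _ fun σ _ =>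
    continuous_const.mul (continuous_finset_prod _ fun i _ => hent (σ i) i)

/-- key integral identity -/
lemma integral_det_Gmat (μ : Measure (EuclideanSpace ℝ (Fin d))) [IsProbabilityMeasure μ]
    (hμ : μ (Metric.sphere (0 : EuclideanSpace ℝ (Fin d)) 1) = 1) :
    ∫ u, (Gmat u).det ∂(Measure.pi fun _ : Fin ℓ => μ)
      = ∑ f : Fin ℓ → Fin d, (Matrix.of fun i j => mm μ (f i) (f j)).det := by
  classical
  -- pointwise expansion
  have hpt : ∀ u : Fin ℓ → EuclideanSpace ℝ (Fin d), (Gmat u).det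
      = ∑ σ : Equiv.Perm (Fin ℓ), ∑ f : Fin ℓ → Fin d,
          ((Equiv.Perm.sign σ : ℤ) : ℝ) * ∏ j, (u j (f (σ⁻¹ j)) * u j (f j)) := by
    intro u
    rw [Matrix.det_apply']
    refine Finset.sum_congr rfl fun σ _ => ?_
    rw [← Finset.mul_sum]
    congr 1
    have h0 : ∏ i, Gmat u (σ i) i = ∏ i : Fin ℓ, ∑ k : Fin d, u (σ i) k * u i k := rfl
    rw [h0, Finset.prod_univ_sum, Fintype.piFinset_univ]
    refine Finset.sum_congr rfl fun f _ => ?_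
    rw [Finset.prod_mul_distrib, Finset.prod_mul_distrib]
    congr 1
    have := Equiv.prod_comp σ (fun j => u j (f (σ⁻¹ j)))
    rw [← this]
    refine Finset.prod_congr rfl fun i _ => by simp
  have hintterm : ∀ (σ : Equiv.Perm (Fin ℓ)) (f : Fin ℓ → Fin d),
      Integrable (fun u : Fin ℓ → EuclideanSpace ℝ (Fin d) =>
        ((Equiv.Perm.sign σ : ℤ) : ℝ) * ∏ j, (u j (f (σ⁻¹ j)) * u j (f j)))
        (Measure.pi fun _ : Fin ℓ => μ) := by
    intro σ f
    exact (integrable_pi_prod μ (fun j => fun v => v (f (σ⁻¹ j)) * v (f j))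
      (fun j => integrable_coord_mul hμ _ _)).const_mul _
  calc ∫ u, (Gmat u).det ∂(Measure.pi fun _ : Fin ℓ => μ)
      = ∫ u, ∑ σ : Equiv.Perm (Fin ℓ), ∑ f : Fin ℓ → Fin d,
          ((Equiv.Perm.sign σ : ℤ) : ℝ) * ∏ j, (u j (f (σ⁻¹ j)) * u j (f j))
          ∂(Measure.pi fun _ : Fin ℓ => μ) :=
        integral_congr_ae (Filter.Eventually.of_forall hpt)
    _ = ∑ σ : Equiv.Perm (Fin ℓ), ∑ f : Fin ℓ → Fin d,
          ∫ u, ((Equiv.Perm.sign σ : ℤ) : ℝ) * ∏ j, (u j (f (σ⁻¹ j)) * u j (f j))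
          ∂(Measure.pi fun _ : Fin ℓ => μ) := by
        rw [integral_finset_sum _ (fun σ _ => integrable_finset_sum _ fun f _ => hintterm σ f)]
        exact Finset.sum_congr rfl fun σ _ =>
          integral_finset_sum _ (fun f _ => hintterm σ f)
    _ = ∑ σ : Equiv.Perm (Fin ℓ), ∑ f : Fin ℓ → Fin d,
          ((Equiv.Perm.sign σ : ℤ) : ℝ) * ∏ j, mm μ (f (σ⁻¹ j)) (f j) := by
        refine Finset.sum_congr rfl fun σ _ => Finset.sum_congr rfl fun f _ => ?_
        rw [integral_const_mul]
        congr 1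
        exact integral_pi_prod μ (fun j => fun v => v (f (σ⁻¹ j)) * v (f j))
    _ = ∑ f : Fin ℓ → Fin d, ∑ σ : Equiv.Perm (Fin ℓ),
          ((Equiv.Perm.sign σ : ℤ) : ℝ) * ∏ j, mm μ (f (σ⁻¹ j)) (f j) := Finset.sum_comm
    _ = ∑ f : Fin ℓ → Fin d, (Matrix.of fun i j => mm μ (f i) (f j)).det := by
        refine Finset.sum_congr rfl fun f _ => ?_
        have hre := Equiv.sum_comp (Equiv.inv (Equiv.Perm (Fin ℓ)))
          (fun σ : Equiv.Perm (Fin ℓ) =>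
            ((Equiv.Perm.sign σ : ℤ) : ℝ) * ∏ j, mm μ (f (σ⁻¹ j)) (f j))
        simp only [Equiv.inv_apply] at hre
        rw [← hre, Matrix.det_apply']
        refine Finset.sum_congr rfl fun σ _ => ?_
        rw [Equiv.Perm.sign_inv, inv_inv]
        rfl

lemma sum_det_le (μ : Measure (EuclideanSpace ℝ (Fin d))) [IsProbabilityMeasure μ]
    (hμ : μ (Metric.sphere (0 : EuclideanSpace ℝ (Fin d)) 1) = 1)
    (hℓ2 : 2 ≤ ℓ) (hd : ℓ ≤ d) :
    ∑ f : Fin ℓ → Fin d, (Matrix.of fun i j => mm μ (f i) (f j)).det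
      ≤ (d.descFactorial ℓ : ℝ) / (d : ℝ) ^ ℓ := by
  classical
  haveI : Nonempty (Fin ℓ) := ⟨⟨0, by omega⟩⟩
  have hdpos : (0:ℝ) < (d : ℝ) ^ ℓ := by
    have : 0 < d := by omega
    positivity
  set y : Fin d → ℝ := fun a => mm μ a a with hy
  have hynn : ∀ a, 0 ≤ y a := fun a => integral_nonneg fun v => mul_self_nonneg _
  have hsum : ∑ a, y a = 1 := sum_mm_diag hμ
  have hsplit := Finset.sum_filter_add_sum_filter_not Finset.univ
    (fun f : Fin ℓ → Fin d => Function.Injective f)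
    (fun f => (Matrix.of fun i j => mm μ (f i) (f j)).det)
  rw [← hsplit]
  have hnon : ∑ f ∈ Finset.univ.filter (fun f : Fin ℓ → Fin d => ¬ Function.Injective f),
      (Matrix.of fun i j => mm μ (f i) (f j)).det = 0 := by
    refine Finset.sum_eq_zero fun f hf => ?_
    have hninj := (Finset.mem_filter.1 hf).2
    rw [Function.not_injective_iff] at hninj
    obtain ⟨a, b, hab, hne⟩ := hninj
    exact Matrix.det_zero_of_row_eq hne (funext fun j => by simp [hab])
  rw [hnon, add_zero]
  have hinjle : ∑ f ∈ Finset.univ.filter (fun f : Fin ℓ → Fin d => Function.Injective f),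
      (Matrix.of fun i j => mm μ (f i) (f j)).det
      ≤ ∑ f ∈ Finset.univ.filter (fun f : Fin ℓ → Fin d => Function.Injective f),
        ∏ j, y (f j) := by
    refine Finset.sum_le_sum fun f _ => ?_
    have h := psd_det_le_prod_diag (mm_psd hμ f)
    simpa using h
  have hcount := sum_injective_eq (Fin ℓ) y
  rw [Fintype.card_fin] at hcount
  have hesum := esum_le_descFactorial hynn hsum ℓ (by rw [Fintype.card_fin]; exact hd)
  rw [Fintype.card_fin] at hesum
  have hesnn : 0 ≤ esum y Finset.univ ℓ := esum_nonneg hynn _ _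
  calc ∑ f ∈ Finset.univ.filter (fun f : Fin ℓ → Fin d => Function.Injective f),
        (Matrix.of fun i j => mm μ (f i) (f j)).det
      ≤ (ℓ.factorial : ℝ) * esum y Finset.univ ℓ := by rw [← hcount]; exact hinjle
    _ ≤ (d.descFactorial ℓ : ℝ) / (d : ℝ) ^ ℓ := by
        rw [le_div_iff₀ hdpos]
        calc (ℓ.factorial : ℝ) * esum y Finset.univ ℓ * (d:ℝ)^ℓ
            = (d:ℝ)^ℓ * (ℓ.factorial : ℝ) * esum y Finset.univ ℓ := by ring
          _ ≤ (d.descFactorial ℓ : ℝ) := hesum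

end Main

end MutualOrth

open MutualOrth in
theorem mutual_orth_prob_le (d ℓ : ℕ) (hℓ : 2 ≤ ℓ) (hd : ℓ ≤ d)
    (μ : Measure (EuclideanSpace ℝ (Fin d))) [IsProbabilityMeasure μ]
    (hμ : μ (Metric.sphere (0 : EuclideanSpace ℝ (Fin d)) 1) = 1) :
    (Measure.pi fun _ : Fin ℓ => μ)
      {u : Fin ℓ → EuclideanSpace ℝ (Fin d) | ∀ i j, i ≠ j → ⟪u i, u j⟫ = 0}
      ≤ ENNReal.ofReal ((d.factorial : ℝ) / (((d - ℓ).factorial : ℝ) * (d : ℝ) ^ ℓ)) := by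
  classical
  set V := EuclideanSpace ℝ (Fin d)
  set ν := Measure.pi fun _ : Fin ℓ => μ with hν
  haveI : IsProbabilityMeasure ν := by
    constructor
    rw [hν, Measure.pi_univ]
    simp
  set E := {u : Fin ℓ → V | ∀ i j, i ≠ j → ⟪u i, u j⟫ = 0} with hE
  set T := Set.univ.pi fun _ : Fin ℓ => Metric.sphere (0 : V) 1 with hT
  have hTmeas : MeasurableSet T :=
    MeasurableSet.univ_pi fun _ => Metric.isClosed_sphere.measurableSet
  have hEmeas : MeasurableSet E := by
    have hrw : E = ⋂ (i) (j) (_ : i ≠ j), {u : Fin ℓ → V | ⟪u i, u j⟫ = (0:ℝ)} := by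
      ext u; simp [hE, Set.mem_iInter]
    rw [hrw]
    exact MeasurableSet.iInter fun i => MeasurableSet.iInter fun j =>
      MeasurableSet.iInter fun _ =>
        (isClosed_eq (Continuous.inner (continuous_apply i) (continuous_apply j))
          continuous_const).measurableSet
  set E' := E ∩ T with hE'
  have hE'meas : MeasurableSet E' := hEmeas.inter hTmeas
  have hνT : ν T = 1 := by
    rw [hν, hT, Measure.pi_pi]
    simp [hμ]
  have hTc : ν Tᶜ = 0 := by
    rw [measure_compl hTmeas (measure_ne_top _ _), hνT, measure_univ, tsub_self]
  have hmono : ν E ≤ ν E' := by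
    have hsub : E ⊆ E' ∪ Tᶜ := by
      intro u hu
      by_cases h : u ∈ T
      · exact Or.inl ⟨hu, h⟩
      · exact Or.inr h
    calc ν E ≤ ν (E' ∪ Tᶜ) := measure_mono hsub
      _ ≤ ν E' + ν Tᶜ := measure_union_le _ _
      _ = ν E' := by rw [hTc, add_zero]
  -- pointwise indicator bound
  have hind_le : ∀ u, E'.indicator (fun _ => (1:ℝ)) u ≤ (Gmat u).det := by
    intro u
    by_cases hu : u ∈ E'
    · rw [Set.indicator_of_mem hu]
      have hG1 : Gmat u = (1 : Matrix (Fin ℓ) (Fin ℓ) ℝ) := by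
        ext i j
        by_cases hij : i = j
        · subst hij
          rw [Matrix.one_apply_eq]
          have h1 : Gmat u i i = ⟪u i, u i⟫ := (inner_eq_sum _ _).symm
          have hnorm : ‖u i‖ = 1 := by
            have := hu.2 i (Set.mem_univ i)
            rwa [mem_sphere_zero_iff_norm] at this
          rw [h1, real_inner_self_eq_norm_sq, hnorm, one_pow]
        · rw [Matrix.one_apply_ne hij]
          have h1 : Gmat u i j = ⟪u i, u j⟫ := (inner_eq_sum _ _).symm
          rw [h1, hu.1 i j hij]
      rw [hG1, Matrix.det_one]
    · rw [Set.indicator_of_notMem hu]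
      exact psd_det_nonneg (Gmat_psd u)
  have hTae : ∀ᵐ u ∂ν, u ∈ T := by
    refine (MeasureTheory.ae_iff).2 ?_
    convert hTc using 2
    rfl
  have hdet_int : Integrable (fun u : Fin ℓ → V => (Gmat u).det) ν := by
    refine ⟨(det_Gmat_cont).aestronglyMeasurable,
      HasFiniteIntegral.of_bounded (C := (ℓ.factorial : ℝ)) ?_⟩
    filter_upwards [hTae] with u hu
    rw [Real.norm_eq_abs]
    refine abs_det_le_factorial _ fun i j => ?_
    have h1 : Gmat u i j = ⟪u i, u j⟫ := (inner_eq_sum _ _).symm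
    have hni : ‖u i‖ = 1 := by
      have := hu i (Set.mem_univ i); rwa [mem_sphere_zero_iff_norm] at this
    have hnj : ‖u j‖ = 1 := by
      have := hu j (Set.mem_univ j); rwa [mem_sphere_zero_iff_norm] at this
    calc |Gmat u i j| = |⟪u i, u j⟫| := by rw [h1]
      _ ≤ ‖u i‖ * ‖u j‖ := abs_real_inner_le_norm _ _
      _ = 1 := by rw [hni, hnj, mul_one]
  have hind_int : Integrable (E'.indicator fun _ => (1:ℝ)) ν :=
    (integrable_const (1:ℝ)).indicator hE'meas
  have key : (ν E').toReal ≤ ∫ u, (Gmat u).det ∂ν := by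
    rw [← measureReal_def, ← MeasureTheory.integral_indicator_one hE'meas]
    exact integral_mono hind_int hdet_int hind_le
  have hfinal : ∫ u, (Gmat u).det ∂ν ≤ (d.descFactorial ℓ : ℝ) / (d : ℝ) ^ ℓ := by
    rw [hν, integral_det_Gmat μ hμ]
    exact sum_det_le μ hμ hℓ hd
  have htarget : (d.descFactorial ℓ : ℝ) / (d : ℝ) ^ ℓ
      = (d.factorial : ℝ) / (((d - ℓ).factorial : ℝ) * (d : ℝ) ^ ℓ) := by
    have hfac : ((d - ℓ).factorial : ℝ) * (d.descFactorial ℓ : ℝ) = (d.factorial : ℝ) := by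
      exact_mod_cast congrArg (Nat.cast : ℕ → ℝ) (Nat.factorial_mul_descFactorial hd)
    have hfne : ((d - ℓ).factorial : ℝ) ≠ 0 := by positivity
    rw [← hfac, mul_div_mul_left _ _ hfne]
  calc ν E ≤ ν E' := hmono
    _ = ENNReal.ofReal ((ν E').toReal) := (ENNReal.ofReal_toReal (measure_ne_top _ _)).symm
    _ ≤ ENNReal.ofReal (∫ u, (Gmat u).det ∂ν) := ENNReal.ofReal_le_ofReal key
    _ ≤ ENNReal.ofReal ((d.factorial : ℝ) / (((d - ℓ).factorial : ℝ) * (d : ℝ) ^ ℓ)) := by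
        refine ENNReal.ofReal_le_ofReal ?_
        rw [← htarget]
        exact hfinal
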